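/- For every nonnegative integer k, the tree G_k has domination number γ(G_k) = 2k + 1 and exactly 5^k + 3^k minimum dominating sets, i.e., Γ(G_k) = 5^k + 3^k. -/
import Mathlib


/-- A set `D` of vertices is a dominating set if every vertex either lies in `D`
or is adjacent to a vertex of `D`. -/
def IsDominatingSet {V : Type*} (G : SimpleGraph V) (D : Finset V) : Prop :=
  ∀ v : V, v ∈ D ∨ ∃ w ∈ D, G.Adj v w

/-- The domination number: the minimum size of a dominating set. -/
noncomputable def dominationNumber {V : Type*} [Fintype V] (G : SimpleGraph V) : ℕ :=
  sInf {n | ∃ D : Finset V, IsDominatingSet G D ∧ D.card = n}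

/-- The number of minimum dominating sets. -/
noncomputable def numMinDomSets {V : Type*} [Fintype V] (G : SimpleGraph V) : ℕ :=
  Set.ncard {D : Finset V | IsDominatingSet G D ∧ D.card = dominationNumber G}

/-- The tree `G_k`: vertices `r = inl 0`, `s = inl 1`, and for each `i : Fin k` a path
`y_i x_i w_i v_i u_i = inr (i, 0), …, inr (i, 4)`; edges `r s`, `s y_i`, and the path edges. -/
def Gk (k : ℕ) : SimpleGraph (Fin 2 ⊕ (Fin k × Fin 5)) :=
  SimpleGraph.fromRel (fun a b =>
    (a = Sum.inl 0 ∧ b = Sum.inl 1) ∨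
    (∃ i : Fin k, a = Sum.inl 1 ∧ b = Sum.inr (i, 0)) ∨
    (∃ (i : Fin k) (j : Fin 4), a = Sum.inr (i, j.castSucc) ∧ b = Sum.inr (i, j.succ)))

section GkAux
variable {k : ℕ}


lemma adj_inl0 (v : Fin 2 ⊕ (Fin k × Fin 5)) :
    (Gk k).Adj (Sum.inl 0) v ↔ v = Sum.inl 1 := by
  constructor
  · intro h; rw [Gk, SimpleGraph.fromRel_adj] at h
    rcases h with ⟨hne, (⟨h1,h2⟩|⟨i,h1,h2⟩|⟨i,j,h1,h2⟩)|(⟨h1,h2⟩|⟨i,h1,h2⟩|⟨i,j,h1,h2⟩)⟩ <;>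
      simp_all <;> omega
  · rintro rfl; rw [Gk, SimpleGraph.fromRel_adj]
    exact ⟨by simp, Or.inl (Or.inl ⟨rfl, rfl⟩)⟩

lemma adj_inl1 (v : Fin 2 ⊕ (Fin k × Fin 5)) :
    (Gk k).Adj (Sum.inl 1) v ↔ v = Sum.inl 0 ∨ ∃ i, v = Sum.inr (i, 0) := by
  constructor
  · intro h; rw [Gk, SimpleGraph.fromRel_adj] at h
    rcases h with ⟨hne, (⟨h1,h2⟩|⟨i,h1,h2⟩|⟨i,j,h1,h2⟩)|(⟨h1,h2⟩|⟨i,h1,h2⟩|⟨i,j,h1,h2⟩)⟩ <;>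
      simp_all
  · rintro (rfl | ⟨i, rfl⟩) <;> rw [Gk, SimpleGraph.fromRel_adj]
    · exact ⟨by simp, Or.inr (Or.inl ⟨rfl, rfl⟩)⟩
    · exact ⟨by simp, Or.inl (Or.inr (Or.inl ⟨i, rfl, rfl⟩))⟩

lemma adj_inr (i : Fin k) (j : Fin 5) (v : Fin 2 ⊕ (Fin k × Fin 5)) :
    (Gk k).Adj (Sum.inr (i, j)) v ↔
      (j = 0 ∧ v = Sum.inl 1) ∨
      ∃ j' : Fin 5, (j'.val = j.val + 1 ∨ j.val = j'.val + 1) ∧ v = Sum.inr (i, j') := by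
  constructor
  · intro h; rw [Gk, SimpleGraph.fromRel_adj] at h
    rcases h with ⟨hne, (⟨h1,h2⟩|⟨i',h1,h2⟩|⟨i',j0,h1,h2⟩)|(⟨h1,h2⟩|⟨i',h1,h2⟩|⟨i',j0,h1,h2⟩)⟩
    · exact absurd h1 (by simp)
    · exact absurd h1 (by simp)
    · injection h1 with h1; obtain ⟨rfl, rfl⟩ := Prod.mk.inj h1
      exact Or.inr ⟨j0.succ, Or.inl (by simp), h2⟩
    · exact absurd h2 (by simp)
    · injection h2 with h2; obtain ⟨rfl, h0⟩ := Prod.mk.inj h2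
      exact Or.inl ⟨h0, h1⟩
    · injection h2 with h2; obtain ⟨rfl, rfl⟩ := Prod.mk.inj h2
      exact Or.inr ⟨j0.castSucc, Or.inr (by simp), h1⟩
  · rintro (⟨rfl, rfl⟩ | ⟨j', hj | hj, rfl⟩) <;> rw [Gk, SimpleGraph.fromRel_adj]
    · exact ⟨by simp, Or.inr (Or.inr (Or.inl ⟨i, rfl, rfl⟩))⟩
    · have h4 : j.val < 4 := by omega
      refine ⟨by simp [Fin.ext_iff]; try omega, Or.inl (Or.inr (Or.inr ⟨i, ⟨j.val, h4⟩, ?_, ?_⟩))⟩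
      · simp [Fin.ext_iff]; try omega
      · simp [Fin.ext_iff]; try omega
    · have h4 : j'.val < 4 := by omega
      refine ⟨by simp [Fin.ext_iff]; try omega, Or.inr (Or.inr (Or.inr ⟨i, ⟨j'.val, h4⟩, ?_, ?_⟩))⟩
      · simp [Fin.ext_iff]; try omega
      · simp [Fin.ext_iff]; try omega

def emb3 : Fin 3 → Fin 5 := fun b => ⟨b.val, by omega⟩
def emb2 : Fin 2 → Fin 5 := fun c => ⟨c.val + 3, by omega⟩

def good (a : Fin 2) (p : Fin 3 × Fin 2) : Prop :=
  (p.1 = 1 ∨ p.1 = 2 ∨ p.2 = 0) ∧ (a = 1 ∨ p.1 = 0 ∨ p.1 = 1)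

instance : ∀ (a : Fin 2) (p : Fin 3 × Fin 2), Decidable (good a p) := fun a p => by
  unfold good; infer_instance

def enc (t : Fin 2 × (Fin k → Fin 3 × Fin 2)) : Finset (Fin 2 ⊕ (Fin k × Fin 5)) :=
  insert (Sum.inl t.1) (Finset.univ.biUnion fun i =>
    {Sum.inr (i, emb3 (t.2 i).1), Sum.inr (i, emb2 (t.2 i).2)})

lemma fin2cases (x : Fin 2) : x = 0 ∨ x = 1 := by revert x; decide
lemma fin3cases (x : Fin 3) : x = 0 ∨ x = 1 ∨ x = 2 := by revert x; decide

lemma mem_enc (t : Fin 2 × (Fin k → Fin 3 × Fin 2)) (v) : v ∈ enc t ↔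
    v = Sum.inl t.1 ∨ ∃ i, v = Sum.inr (i, emb3 (t.2 i).1) ∨ v = Sum.inr (i, emb2 (t.2 i).2) := by
  simp [enc]

lemma emb3_ne_emb2 (b : Fin 3) (c : Fin 2) : emb3 b ≠ emb2 c := by
  simp [emb3, emb2, Fin.ext_iff]; omega

lemma card_enc (t : Fin 2 × (Fin k → Fin 3 × Fin 2)) : (enc t).card = 2 * k + 1 := by
  rw [enc, Finset.card_insert_of_notMem (by simp), Finset.card_biUnion]
  · simp [Finset.card_insert_of_notMem, emb3_ne_emb2, mul_comm]
  · intro i _ i' _ hne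
    simp only [Finset.disjoint_left, Finset.mem_insert, Finset.mem_singleton]
    rintro a (rfl | rfl) (h | h) <;> exact hne (by injection h with h; exact (Prod.mk.inj h).1) |>.elim

lemma enc_mem_inl (t : Fin 2 × (Fin k → Fin 3 × Fin 2)) : Sum.inl t.1 ∈ enc t := by
  simp [mem_enc]

lemma enc_mem_b (t : Fin 2 × (Fin k → Fin 3 × Fin 2)) (i : Fin k) :
    Sum.inr (i, emb3 (t.2 i).1) ∈ enc t := by
  rw [mem_enc]; exact Or.inr ⟨i, Or.inl rfl⟩

lemma enc_mem_c (t : Fin 2 × (Fin k → Fin 3 × Fin 2)) (i : Fin k) :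
    Sum.inr (i, emb2 (t.2 i).2) ∈ enc t := by
  rw [mem_enc]; exact Or.inr ⟨i, Or.inr rfl⟩

lemma enc_dom (t : Fin 2 × (Fin k → Fin 3 × Fin 2)) (ht : ∀ i, good t.1 (t.2 i)) :
    IsDominatingSet (Gk k) (enc t) := by
  have hinl := enc_mem_inl t
  rintro (a | ⟨i, j⟩)
  · rcases fin2cases t.1 with h1 | h1 <;> rcases fin2cases a with rfl | rfl
    · exact Or.inl (h1 ▸ hinl)
    · exact Or.inr ⟨Sum.inl 0, h1 ▸ hinl, (adj_inl1 _).mpr (Or.inl rfl)⟩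
    · exact Or.inr ⟨Sum.inl 1, h1 ▸ hinl, (adj_inl0 _).mpr rfl⟩
    · exact Or.inl (h1 ▸ hinl)
  · have hb := enc_mem_b t i
    have hc := enc_mem_c t i
    obtain ⟨h1, h2⟩ := ht i
    have b5 : (emb3 (t.2 i).1).val = ((t.2 i).1).val := rfl
    have c5 : (emb2 (t.2 i).2).val = ((t.2 i).2).val + 3 := rfl
    rcases fin3cases (t.2 i).1 with hb3 | hb3 | hb3 <;>
      rcases fin2cases (t.2 i).2 with hc2 | hc2 <;>
      fin_cases j <;>
      [skip; skip; skip; skip; skip; skip; skip; skip; skip; skip;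
       skip; skip; skip; skip; skip; skip; skip; skip; skip; skip;
       skip; skip; skip; skip; skip; skip; skip; skip; skip; skip] <;>
      first
      | (exact Or.inl (by rw [mem_enc]; exact Or.inr ⟨i, Or.inl (by rw [hb3]; rfl)⟩))
      | (exact Or.inl (by rw [mem_enc]; exact Or.inr ⟨i, Or.inr (by rw [hc2]; rfl)⟩))
      | (refine Or.inr ⟨_, hb, (adj_inr i _ _).mpr (Or.inr ⟨emb3 (t.2 i).1, ?_, rfl⟩)⟩
         rw [b5, hb3]; decide)
      | (refine Or.inr ⟨_, hc, (adj_inr i _ _).mpr (Or.inr ⟨emb2 (t.2 i).2, ?_, rfl⟩)⟩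
         rw [c5, hc2]; decide)
      | (rcases h2 with ha | hb' | hb'
         · exact Or.inr ⟨Sum.inl 1, ha ▸ hinl, (adj_inr i _ _).mpr (Or.inl ⟨rfl, rfl⟩)⟩
         · exact absurd hb' (by rw [hb3]; decide)
         · exact absurd hb' (by rw [hb3]; decide))
      | (rcases h1 with hb' | hb' | hc'
         · exact absurd hb' (by rw [hb3]; decide)
         · exact absurd hb' (by rw [hb3]; decide)
         · exact absurd hc' (by rw [hc2]; decide))

def classify : Fin 2 ⊕ (Fin k × Fin 5) → Unit ⊕ (Fin k × Bool)
  | Sum.inl _ => Sum.inl ()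
  | Sum.inr (i, j) => Sum.inr (i, decide (3 ≤ j.val))

def center : Unit ⊕ (Fin k × Bool) → Fin 2 ⊕ (Fin k × Fin 5)
  | Sum.inl _ => Sum.inl 0
  | Sum.inr (i, false) => Sum.inr (i, 1)
  | Sum.inr (i, true) => Sum.inr (i, 4)

lemma classify_dominator (t : Unit ⊕ (Fin k × Bool)) (v : Fin 2 ⊕ (Fin k × Fin 5))
    (h : v = center t ∨ (Gk k).Adj (center t) v) : classify v = t := by
  rcases t with ⟨⟩ | ⟨i, b⟩
  · rcases h with rfl | h
    · rfl
    · rw [center] at h; rw [(adj_inl0 v).mp h]; rfl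
  · cases b
    · rcases h with rfl | h
      · rfl
      · rw [center] at h
        rcases (adj_inr i 1 v).mp h with ⟨h1, _⟩ | ⟨j', hj, rfl⟩
        · exact absurd h1 (by decide)
        · have : (1 : Fin 5).val = 1 := rfl
          rw [this] at hj
          simp only [classify, Sum.inr.injEq, Prod.mk.injEq]
          exact ⟨trivial, by rw [decide_eq_false_iff_not]; omega⟩
    · rcases h with rfl | h
      · rfl
      · rw [center] at h
        rcases (adj_inr i 4 v).mp h with ⟨h1, _⟩ | ⟨j', hj, rfl⟩
        · exact absurd h1 (by decide)
        · have : (4 : Fin 5).val = 4 := rfl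
          rw [this] at hj
          have hj' := j'.isLt
          simp only [classify, Sum.inr.injEq, Prod.mk.injEq]
          exact ⟨trivial, by rw [decide_eq_true_eq]; omega⟩

lemma card_classes : Fintype.card (Unit ⊕ (Fin k × Bool)) = 2 * k + 1 := by
  simp; ring

lemma univ_sub_image {D : Finset (Fin 2 ⊕ (Fin k × Fin 5))} (hD : IsDominatingSet (Gk k) D) :
    (Finset.univ : Finset (Unit ⊕ (Fin k × Bool))) ⊆ D.image classify := by
  intro t _
  rcases hD (center t) with h | ⟨w, hw, hadj⟩
  · exact Finset.mem_image.mpr ⟨center t, h, classify_dominator t _ (Or.inl rfl)⟩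
  · exact Finset.mem_image.mpr ⟨w, hw, classify_dominator t _ (Or.inr hadj)⟩

lemma dom_lower {D : Finset (Fin 2 ⊕ (Fin k × Fin 5))} (hD : IsDominatingSet (Gk k) D) :
    2 * k + 1 ≤ D.card :=
  calc 2 * k + 1 = Fintype.card (Unit ⊕ (Fin k × Bool)) := card_classes.symm
    _ = (Finset.univ : Finset (Unit ⊕ (Fin k × Bool))).card := Finset.card_univ.symm
    _ ≤ (D.image classify).card := Finset.card_le_card (univ_sub_image hD)
    _ ≤ D.card := Finset.card_image_le

lemma dom_structure {D : Finset (Fin 2 ⊕ (Fin k × Fin 5))} (hD : IsDominatingSet (Gk k) D)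
    (hcard : D.card = 2 * k + 1) :
    ∃ t : Fin 2 × (Fin k → Fin 3 × Fin 2), (∀ i, good t.1 (t.2 i)) ∧ enc t = D := by
  classical
  have himg : D.image classify = Finset.univ :=
    Finset.eq_univ_of_forall fun t => univ_sub_image hD (Finset.mem_univ t)
  have hinj : Set.InjOn (classify (k := k)) (↑D : Set (Fin 2 ⊕ (Fin k × Fin 5))) := by
    rw [← Finset.card_image_iff, himg, Finset.card_univ, card_classes, hcard]
  -- the unique element of D in {r, s}
  have ha : Sum.inl (if Sum.inl 1 ∈ D then (1 : Fin 2) else 0) ∈ D := by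
    by_cases h : Sum.inl 1 ∈ D
    · simpa [h] using h
    · rcases hD (Sum.inl 0) with h0 | ⟨w, hw, hadj⟩
      · simpa [h] using h0
      · exact absurd ((adj_inl0 w).mp hadj ▸ hw) h
  -- one element of D in {y,x,w}_i
  have hxb : ∀ i : Fin k, ∃ j : Fin 5, j.val < 3 ∧ Sum.inr (i, j) ∈ D := by
    intro i
    rcases hD (Sum.inr (i, 1)) with h0 | ⟨w, hw, hadj⟩
    · exact ⟨1, by omega, h0⟩
    · rcases (adj_inr i 1 w).mp hadj with ⟨h1, _⟩ | ⟨j', hj, rfl⟩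
      · exact absurd h1 (by decide)
      · have : (1 : Fin 5).val = 1 := rfl
        rw [this] at hj
        exact ⟨j', by omega, hw⟩
  -- one element of D in {v,u}_i
  have hxc : ∀ i : Fin k, ∃ j : Fin 5, 3 ≤ j.val ∧ Sum.inr (i, j) ∈ D := by
    intro i
    rcases hD (Sum.inr (i, 4)) with h0 | ⟨w, hw, hadj⟩
    · exact ⟨4, by omega, h0⟩
    · rcases (adj_inr i 4 w).mp hadj with ⟨h1, _⟩ | ⟨j', hj, rfl⟩
      · exact absurd h1 (by decide)
      · have h4 : (4 : Fin 5).val = 4 := rfl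
        rw [h4] at hj
        have := j'.isLt
        exact ⟨j', by omega, hw⟩
  -- uniqueness keys
  have key1 : ∀ (i : Fin k) (j j' : Fin 5), Sum.inr (i, j) ∈ D → Sum.inr (i, j') ∈ D →
      j.val < 3 → j'.val < 3 → j = j' := by
    intro i j j' h h' hj hj'
    have := hinj h h' (by
      simp only [classify, Sum.inr.injEq, Prod.mk.injEq]
      exact ⟨trivial, by rw [decide_eq_false_iff_not.mpr (by omega), decide_eq_false_iff_not.mpr (by omega)]⟩)
    injection this with this
    exact (Prod.mk.inj this).2
  have key2 : ∀ (i : Fin k) (j j' : Fin 5), Sum.inr (i, j) ∈ D → Sum.inr (i, j') ∈ D →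
      3 ≤ j.val → 3 ≤ j'.val → j = j' := by
    intro i j j' h h' hj hj'
    have := hinj h h' (by
      simp only [classify, Sum.inr.injEq, Prod.mk.injEq]
      exact ⟨trivial, by rw [decide_eq_true_eq.mpr (by omega : 3 ≤ j.val),
        decide_eq_true_eq.mpr (by omega : 3 ≤ j'.val)]⟩)
    injection this with this
    exact (Prod.mk.inj this).2
  set a : Fin 2 := if Sum.inl 1 ∈ D then (1 : Fin 2) else 0 with hadef
  set f : Fin k → Fin 3 × Fin 2 := fun i =>
    (⟨(hxb i).choose.val, (hxb i).choose_spec.1⟩,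
     ⟨(hxb i).choose.val - (hxb i).choose.val + ((hxc i).choose.val - 3), by
        have := (hxc i).choose.isLt; omega⟩) with hfdef
  have hb5 : ∀ i, emb3 (f i).1 = (hxb i).choose := fun i => Fin.ext (by simp [hfdef, emb3])
  have hc5 : ∀ i, emb2 (f i).2 = (hxc i).choose := fun i => Fin.ext (by
    have := (hxc i).choose_spec.1
    simp [hfdef, emb2]; omega)
  have hmemb : ∀ i, Sum.inr (i, emb3 (f i).1) ∈ D := fun i => by
    rw [hb5]; exact (hxb i).choose_spec.2
  have hmemc : ∀ i, Sum.inr (i, emb2 (f i).2) ∈ D := fun i => by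
    rw [hc5]; exact (hxc i).choose_spec.2
  have hsub : enc (a, f) ⊆ D := by
    intro v hv
    rcases (mem_enc (a, f) v).mp hv with rfl | ⟨i, rfl | rfl⟩
    · exact ha
    · exact hmemb i
    · exact hmemc i
  have henc : enc (a, f) = D :=
    Finset.eq_of_subset_of_card_le hsub (by rw [hcard, card_enc])
  refine ⟨(a, f), fun i => ?_, henc⟩
  have hbval : ∀ (j : Fin 5), Sum.inr (i, j) ∈ D → j.val < 3 → ((f i).1 : ℕ) = j.val := by
    intro j hj hj3
    have := key1 i (hxb i).choose j (hxb i).choose_spec.2 hj (hxb i).choose_spec.1 hj3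
    simp [hfdef, ← this]
  have hcval : ∀ (j : Fin 5), Sum.inr (i, j) ∈ D → 3 ≤ j.val → ((f i).2 : ℕ) + 3 = j.val := by
    intro j hj hj3
    have := key2 i (hxc i).choose j (hxc i).choose_spec.2 hj (hxc i).choose_spec.1 hj3
    have h5 := (hxc i).choose_spec.1
    simp only [hfdef]
    omega
  show good a (f i)
  constructor
  · -- dominate w_i = (i,2)
    rcases hD (Sum.inr (i, 2)) with h0 | ⟨w, hw, hadj⟩
    · have := hbval 2 h0 (by decide)
      exact Or.inr (Or.inl (Fin.ext (by rw [this]; rfl)))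
    · rcases (adj_inr i 2 w).mp hadj with ⟨h1, _⟩ | ⟨j', hj, rfl⟩
      · exact absurd h1 (by decide)
      · have h2v : (2 : Fin 5).val = 2 := rfl
        rw [h2v] at hj
        rcases hj with hj | hj
        · -- j' = 3 : c = 0
          have := hcval j' hw (by omega)
          exact Or.inr (Or.inr (Fin.ext (by omega)))
        · -- j' = 1 : b = 1
          have := hbval j' hw (by omega)
          exact Or.inl (Fin.ext (by omega))
  · -- dominate y_i = (i,0)
    rcases hD (Sum.inr (i, 0)) with h0 | ⟨w, hw, hadj⟩
    · have := hbval 0 h0 (by decide)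
      exact Or.inr (Or.inl (Fin.ext (by rw [this]; rfl)))
    · rcases (adj_inr i 0 w).mp hadj with ⟨_, rfl⟩ | ⟨j', hj, rfl⟩
      · exact Or.inl (by simp [hadef, hw])
      · have h0v : (0 : Fin 5).val = 0 := rfl
        rw [h0v] at hj
        rcases hj with hj | hj
        · have := hbval j' hw (by omega)
          exact Or.inr (Or.inr (Fin.ext (by omega)))
        · omega

lemma emb3_inj : Function.Injective emb3 := fun a b h => Fin.ext (by
  have : (emb3 a).val = (emb3 b).val := by rw [h]
  simpa [emb3] using this)

lemma emb2_inj : Function.Injective emb2 := fun a b h => Fin.ext (by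
  have : (emb2 a).val = (emb2 b).val := by rw [h]
  simp [emb2] at this; omega)

lemma enc_inj : Function.Injective (enc (k := k)) := by
  intro t t' h
  have h1 : t.1 = t'.1 := by
    have := (mem_enc t' (Sum.inl t.1)).mp (h ▸ enc_mem_inl t)
    rcases this with h' | ⟨i, h' | h'⟩
    · injection h'
    · injection h'
    · injection h'
  have h2 : t.2 = t'.2 := by
    funext i
    refine Prod.ext ?_ ?_
    · have := (mem_enc t' (Sum.inr (i, emb3 (t.2 i).1))).mp (h ▸ enc_mem_b t i)
      rcases this with h' | ⟨i', h' | h'⟩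
      · injection h'
      · injection h' with h'; obtain ⟨rfl, h''⟩ := Prod.mk.inj h'
        exact emb3_inj h''
      · injection h' with h'; obtain ⟨rfl, h''⟩ := Prod.mk.inj h'
        exact absurd h'' (emb3_ne_emb2 _ _)
    · have := (mem_enc t' (Sum.inr (i, emb2 (t.2 i).2))).mp (h ▸ enc_mem_c t i)
      rcases this with h' | ⟨i', h' | h'⟩
      · injection h'
      · injection h' with h'; obtain ⟨rfl, h''⟩ := Prod.mk.inj h'
        exact absurd h''.symm (emb3_ne_emb2 _ _)
      · injection h' with h'; obtain ⟨rfl, h''⟩ := Prod.mk.inj h'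
        exact emb2_inj h''
  exact Prod.ext h1 h2

lemma count_good0 : Fintype.card {p : Fin 3 × Fin 2 // good 0 p} = 3 := by decide
lemma count_good1 : Fintype.card {p : Fin 3 × Fin 2 // good 1 p} = 5 := by decide

lemma card_valid :
    (Finset.univ.filter
      (fun t : Fin 2 × (Fin k → Fin 3 × Fin 2) => ∀ i, good t.1 (t.2 i))).card
      = 5 ^ k + 3 ^ k := by
  classical
  rw [← Fintype.card_subtype]
  rw [Fintype.card_congr
    ((Equiv.subtypeProdEquivSigmaSubtype (fun (a : Fin 2) (f : Fin k → Fin 3 × Fin 2) =>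
        ∀ i, good a (f i))).trans
      (Equiv.sigmaCongrRight (fun a => Equiv.subtypePiEquivPi)))]
  rw [Fintype.card_sigma]
  have hcardpi : ∀ a : Fin 2,
      Fintype.card (∀ _ : Fin k, {p : Fin 3 × Fin 2 // good a p})
        = (Fintype.card {p : Fin 3 × Fin 2 // good a p}) ^ k := by
    intro a
    rw [Fintype.card_pi]
    simp
  rw [Fin.sum_univ_two, hcardpi, hcardpi, count_good0, count_good1]
  ring


end GkAux

/-- `G_k` has domination number `2k + 1` and exactly `5^k + 3^k` minimum dominating sets. -/
theorem Gk_dominationNumber_and_numMinDomSets (k : ℕ) :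
    dominationNumber (Gk k) = 2 * k + 1 ∧ numMinDomSets (Gk k) = 5 ^ k + 3 ^ k := by
  classical
  have hgood0 : ∀ i : Fin k, good 1 ((fun _ : Fin k => ((1 : Fin 3), (0 : Fin 2))) i) :=
    fun _ => by refine ⟨Or.inl rfl, Or.inl rfl⟩
  have hmem : (2 * k + 1) ∈ {n | ∃ D : Finset (Fin 2 ⊕ (Fin k × Fin 5)),
      IsDominatingSet (Gk k) D ∧ D.card = n} :=
    ⟨enc (1, fun _ => (1, 0)), enc_dom _ hgood0, card_enc _⟩
  have hdom : dominationNumber (Gk k) = 2 * k + 1 := by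
    refine le_antisymm (Nat.sInf_le hmem) (le_csInf ⟨_, hmem⟩ ?_)
    rintro n ⟨D, hD, rfl⟩
    exact dom_lower hD
  refine ⟨hdom, ?_⟩
  rw [numMinDomSets, hdom]
  have hset : {D : Finset (Fin 2 ⊕ (Fin k × Fin 5)) |
      IsDominatingSet (Gk k) D ∧ D.card = 2 * k + 1} =
      ↑((Finset.univ.filter
        (fun t : Fin 2 × (Fin k → Fin 3 × Fin 2) => ∀ i, good t.1 (t.2 i))).image enc) := by
    ext D
    simp only [Set.mem_setOf_eq, Finset.coe_image, Set.mem_image, Finset.mem_coe,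
      Finset.mem_filter, Finset.mem_univ, true_and]
    constructor
    · rintro ⟨hD, hcard⟩
      obtain ⟨t, ht, henc⟩ := dom_structure hD hcard
      exact ⟨t, ht, henc⟩
    · rintro ⟨t, ht, rfl⟩
      exact ⟨enc_dom t ht, card_enc t⟩
  rw [hset, Set.ncard_coe_finset,
    Finset.card_image_of_injective _ enc_inj, card_valid]
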